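/- For nonnegative integers a, b, the identity ∑_{k=0}^{b} [a+b+1 choose b-k]_q [a+k choose a]_q [a+k choose b]_q (-1)^k q^{k(a-b+k)+a+k-C(a+k+1,2)} = (-1)^b q^{ab - C(a,2) - C(b,2)} holds in ℤ[q, q^{-1}], where C(m,2) = m(m-1)/2. -/

import Mathlib

open Polynomial Finset

/-- The q-integer `[n]_q = 1 + q + ⋯ + q^{n-1}` as a polynomial in `ℤ[q]`. -/
noncomputable def qint (n : ℕ) : Polynomial ℤ := ∑ i ∈ Finset.range n, X ^ i

/-- The q-factorial `[n]_q! = [n]_q [n-1]_q ⋯ [1]_q`. -/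
noncomputable def qfact : ℕ → Polynomial ℤ
  | 0 => 1
  | n + 1 => qint (n + 1) * qfact n

/-- The Gaussian (q-)binomial coefficient `[n choose k]_q` as a polynomial in `ℤ[q]`,
defined by the q-Pascal recurrence; it equals `∏_{i=1}^k (1-q^{n-i+1})/(1-q^i)` for
`0 ≤ k ≤ n` and `0` otherwise. -/
noncomputable def qbinom : ℕ → ℕ → Polynomial ℤ
  | _, 0 => 1
  | 0, _ + 1 => 0
  | n + 1, k + 1 => qbinom n k + X ^ (k + 1) * qbinom n (k + 1)

lemma qbinom_zero (n : ℕ) : qbinom n 0 = 1 := by cases n <;> rfl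

lemma qbinom_succ_succ (n k : ℕ) :
    qbinom (n+1) (k+1) = qbinom n k + X ^ (k+1) * qbinom n (k+1) := rfl

lemma qbinom_eq_zero : ∀ n k : ℕ, n < k → qbinom n k = 0
  | 0, _+1, _ => rfl
  | n+1, k+1, h => by
      rw [qbinom_succ_succ, qbinom_eq_zero n k (by omega),
        qbinom_eq_zero n (k+1) (by omega)]
      ring

lemma qbinom_self : ∀ n : ℕ, qbinom n n = 1
  | 0 => rfl
  | n+1 => by
      rw [qbinom_succ_succ, qbinom_self n, qbinom_eq_zero n (n+1) (by omega)]
      ring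

lemma qbinom_one_succ : ∀ n : ℕ, qbinom (n+1) 1 = X ^ n + qbinom n 1
  | 0 => by
      rw [qbinom_self 1, qbinom_eq_zero 0 1 (by omega)]; ring
  | n+1 => by
      have h0 := qbinom_succ_succ (n+1) 0
      have h1 := qbinom_one_succ n
      have h2 := qbinom_succ_succ n 0
      rw [qbinom_zero] at h0 h2
      linear_combination h0 + X * h1 - h2

lemma qbinom_pascal2 : ∀ n k : ℕ, k ≤ n →
    qbinom (n+1) (k+1) = X ^ (n-k) * qbinom n k + qbinom n (k+1)
  | n, 0, _ => by
      rw [qbinom_one_succ, qbinom_zero, Nat.sub_zero]; ring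
  | 0, k+1, h => by omega
  | n+1, k+1, h => by
      rcases Nat.lt_or_ge k n with hk | hk
      · obtain ⟨m, rfl⟩ : ∃ m, n = k + (m+1) := ⟨n-k-1, by omega⟩
        have h0 := qbinom_succ_succ (k+(m+1)+1) (k+1)
        have h1 := qbinom_pascal2 (k+(m+1)) k (by omega)
        have h2 := qbinom_pascal2 (k+(m+1)) (k+1) (by omega)
        have h3 := qbinom_succ_succ (k+(m+1)) k
        have h4 := qbinom_succ_succ (k+(m+1)) (k+1)
        rw [show k+(m+1)-k = m+1 from by omega] at h1
        rw [show k+(m+1)-(k+1) = m from by omega] at h2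
        rw [show k+(m+1)+1-(k+1) = m+1 from by omega]
        linear_combination h0 + h1 + X^(k+2)*h2 - X^(m+1)*h3 - h4
      · have hk' : k = n := by omega
        subst hk'
        rw [qbinom_self (k+2), qbinom_self (k+1),
          qbinom_eq_zero (k+1) (k+2) (by omega), Nat.sub_self]
        ring

lemma qbinom_Bid3 (n : ℕ) :
    (∀ k, (1 - X^(n+1-k)) * qbinom (n+1) k = (1 - X^(n+1)) * qbinom n k) ∧
    (∀ k, (1 - X^(k+1)) * qbinom n (k+1) = (1 - X^(n-k)) * qbinom n k) := by
  induction n with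
  | zero =>
    constructor
    · intro k
      match k with
      | 0 => rw [qbinom_zero, qbinom_zero, Nat.sub_zero]
      | 1 => rw [qbinom_self 1, qbinom_eq_zero 0 1 (by omega)]; simp
      | k+2 =>
          rw [qbinom_eq_zero 1 (k+2) (by omega), qbinom_eq_zero 0 (k+2) (by omega)]
          ring
    · intro k
      match k with
      | 0 => rw [qbinom_eq_zero 0 1 (by omega), qbinom_zero]; simp
      | k+1 =>
          rw [qbinom_eq_zero 0 (k+2) (by omega), qbinom_eq_zero 0 (k+1) (by omega)]
          ring
  | succ n ih =>
    obtain ⟨Bn, Dn⟩ := ih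
    have D1 : ∀ k, (1 - X^(k+1)) * qbinom (n+1) (k+1) = (1 - X^(n+1-k)) * qbinom (n+1) k := by
      intro k
      rcases le_or_gt k n with hk | hk
      · obtain ⟨m, rfl⟩ : ∃ m, n = k + m := ⟨n-k, by omega⟩
        have h0 := qbinom_succ_succ (k+m) k
        have h1 := Dn k
        have h2 := Bn k
        rw [show k+m-k = m from by omega] at h1
        rw [show k+m+1-k = m+1 from by omega] at h2 ⊢
        linear_combination (1-X^(k+1))*h0 + X^(k+1)*h1 - h2
      · rw [qbinom_eq_zero (n+1) (k+1) (by omega), show n+1-k = 0 from by omega]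
        ring
    refine ⟨?_, D1⟩
    intro k
    match k with
    | 0 => rw [qbinom_zero, qbinom_zero, Nat.sub_zero]
    | k+1 =>
      rcases le_or_gt k n with hk | hk
      · obtain ⟨m, rfl⟩ : ∃ m, n = k + m := ⟨n-k, by omega⟩
        have h0 := qbinom_pascal2 (k+m+1) k (by omega)
        have h1 := D1 k
        rw [show k+m+1-k = m+1 from by omega] at h0 h1
        rw [show k+m+1+1-(k+1) = m+1 from by omega]
        linear_combination (1-X^(m+1))*h0 - X^(m+1)*h1
      · rcases eq_or_ne k (n+1) with hk' | hk'
        · subst hk'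
          rw [qbinom_self (n+2), qbinom_eq_zero (n+1) (n+2) (by omega),
            show n+1+1-(n+1+1) = 0 from by omega]
          ring
        · rw [qbinom_eq_zero (n+2) (k+1) (by omega),
            qbinom_eq_zero (n+1) (k+1) (by omega)]
          ring

lemma qbinom_idB (n k : ℕ) :
    (1 - X^(n+1-k)) * qbinom (n+1) k = (1 - X^(n+1)) * qbinom n k :=
  (qbinom_Bid3 n).1 k

lemma qbinom_id3 (n k : ℕ) :
    (1 - X^(k+1)) * qbinom n (k+1) = (1 - X^(n-k)) * qbinom n k :=
  (qbinom_Bid3 n).2 k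

lemma qbinom_idA (n k : ℕ) :
    (1 - X^(k+1)) * qbinom (n+1) (k+1) = (1 - X^(n+1)) * qbinom n k := by
  have h := qbinom_id3 (n+1) k
  rcases le_or_gt k n with hk | hk
  · rw [show n+1-k = n+1-k from rfl] at h
    rw [h, qbinom_idB n k]
  · rw [qbinom_eq_zero (n+1) (k+1) (by omega), qbinom_eq_zero n k (by omega)]
    ring

lemma one_sub_X_pow_ne_zero (m : ℕ) : (1 - X^(m+1) : Polynomial ℤ) ≠ 0 := by
  intro h
  have h2 := congrArg (fun p => Polynomial.coeff p (m+1)) h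
  simp [coeff_one] at h2

/-- case `b ≤ a+k`, `k < b`, with `a = i+j+1`, `b = k+j+1`. -/
lemma starA (i j k : ℕ) :
    (1-X^(i+j+2))^2 * (qbinom (i+2*j+k+4) (j+1) * qbinom (i+j+k+2) (i+j+2) *
        qbinom (i+j+k+2) (k+j+1))
    = (1-X^(k+1))*(1-X^(2*i+2*j+k+5)) * (qbinom (i+2*j+k+3) j * qbinom (i+j+k+2) (i+j+1) *
        qbinom (i+j+k+2) (k+j+1))
    + (X^(j+1)*(1-X^k)*(1-X^(2*i+2*j+k+4)) + X^(k+j+1)*(1-X^(i+j+2))^2) *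
        (qbinom (i+2*j+k+3) (j+1) * qbinom (i+j+k+1) (i+j+1) * qbinom (i+j+k+1) (k+j+1)) := by
  have hM : ((1-X^(i+j+k+3)) * ((1-X^(i+1)) * ((1-X^(k+1)) * (1-X^(j+1)))) : Polynomial ℤ) ≠ 0 := by
    refine mul_ne_zero (one_sub_X_pow_ne_zero _) (mul_ne_zero (one_sub_X_pow_ne_zero _)
      (mul_ne_zero (one_sub_X_pow_ne_zero _) (one_sub_X_pow_ne_zero _)))
  refine mul_left_cancel₀ hM ?_
  have hc1 := qbinom_idB (i+2*j+k+3) (j+1)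
  rw [show i+2*j+k+3+1-(j+1) = i+j+k+3 from by omega,
    show i+2*j+k+3+1 = i+2*j+k+4 from by omega] at hc1
  have hc2 := qbinom_idA (i+j+k+1) (i+j+1)
  rw [show i+j+1+1 = i+j+2 from by omega, show i+j+k+1+1 = i+j+k+2 from by omega] at hc2
  have hc3 := qbinom_idB (i+j+k+1) (k+j+1)
  rw [show i+j+k+1+1-(k+j+1) = i+1 from by omega,
    show i+j+k+1+1 = i+j+k+2 from by omega] at hc3
  have hc4 := qbinom_id3 (i+2*j+k+3) j
  rw [show i+2*j+k+3-j = i+j+k+3 from by omega] at hc4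
  have hc5 := qbinom_idB (i+j+k+1) (i+j+1)
  rw [show i+j+k+1+1-(i+j+1) = k+1 from by omega,
    show i+j+k+1+1 = i+j+k+2 from by omega] at hc5
  linear_combination
    ((1-X^(i+1))*(1-X^(k+1))*(1-X^(j+1))*(1-X^(i+j+2))^2 *
      (qbinom (i+j+k+2) (i+j+2) * qbinom (i+j+k+2) (k+j+1))) * hc1 +
    ((1-X^(i+2*j+k+4))*(1-X^(i+1))*(1-X^(k+1))*(1-X^(j+1))*(1-X^(i+j+2)) *
      (qbinom (i+2*j+k+3) (j+1) * qbinom (i+j+k+2) (k+j+1))) * hc2 +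
    (((1-X^(i+2*j+k+4))*(1-X^(k+1))*(1-X^(j+1))*(1-X^(i+j+2))*(1-X^(i+j+k+2)) -
      (1-X^(k+1))*(1-X^(j+1))^2*(1-X^(2*i+2*j+k+5))*(1-X^(i+j+k+2))) *
      (qbinom (i+2*j+k+3) (j+1) * qbinom (i+j+k+1) (i+j+1))) * hc3 +
    ((1-X^(i+1))*(1-X^(k+1))^2*(1-X^(j+1))*(1-X^(2*i+2*j+k+5)) *
      (qbinom (i+j+k+2) (i+j+1) * qbinom (i+j+k+2) (k+j+1))) * hc4 -
    ((1-X^(i+1))*(1-X^(k+1))*(1-X^(j+1))^2*(1-X^(2*i+2*j+k+5)) *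
      (qbinom (i+2*j+k+3) (j+1) * qbinom (i+j+k+2) (k+j+1))) * hc5

lemma stark (a b : ℕ) :
    (1-X^(a+1))^2 * (qbinom (a+b+1) (a+1) * qbinom (a+b+1) b)
    = ((1-X^b)*(1-X^(2*a+b+2)) + X^b*(1-X^(a+1))^2) *
        (qbinom (a+b) a * qbinom (a+b) b) := by
  have hc2 := qbinom_idA (a+b) a
  rw [show a+b+1 = a+b+1 from rfl] at hc2
  have hc3 := qbinom_idB (a+b) b
  rw [show a+b+1-b = a+1 from by omega] at hc3
  linear_combination ((1-X^(a+1)) * qbinom (a+b+1) b) * hc2 +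
    ((1-X^(a+b+1)) * qbinom (a+b) a) * hc3

lemma star (a b k : ℕ) (hk : k < b) :
    (1-X^(a+1))^2 * (qbinom (a+b+2) (b-k) * qbinom (a+k+1) (a+1) * qbinom (a+k+1) b)
    = (1-X^(k+1))*(1-X^(2*a+k+3)) *
        (qbinom (a+b+1) (b-k-1) * qbinom (a+k+1) a * qbinom (a+k+1) b)
    + (X^(b-k)*(1-X^k)*(1-X^(2*a+k+2)) + X^b*(1-X^(a+1))^2) *
        (qbinom (a+b+1) (b-k) * qbinom (a+k) a * qbinom (a+k) b) := by
  rcases Nat.lt_trichotomy (a+k+1) b with hb | hb | hb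
  · -- b > a+k+1 : third binomials vanish
    rw [qbinom_eq_zero (a+k+1) b (by omega), qbinom_eq_zero (a+k) b (by omega)]
    ring
  · -- b = a+k+1
    subst hb
    rw [show a+(a+k+1)+2 = 2*a+k+3 from by omega,
      show a+(a+k+1)+1 = 2*a+k+2 from by omega,
      show a+k+1-k-1 = a from by omega,
      show a+k+1-k = a+1 from by omega,
      qbinom_self (a+k+1), qbinom_eq_zero (a+k) (a+k+1) (by omega)]
    have hc1 := qbinom_idA (2*a+k+2) a
    rw [show 2*a+k+2+1 = 2*a+k+3 from by omega] at hc1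
    have hc2 := qbinom_id3 (a+k+1) a
    rw [show a+k+1-a = k+1 from by omega] at hc2
    linear_combination ((1-X^(a+1)) * qbinom (a+k+1) (a+1)) * hc1 +
      ((1-X^(2*a+k+3)) * qbinom (2*a+k+2) a) * hc2
  · -- b ≤ a+k
    obtain ⟨i, j, rfl, rfl⟩ : ∃ i j, a = i+j+1 ∧ b = k+j+1 :=
      ⟨a+k-b, b-k-1, by omega, by omega⟩
    rw [show i+j+1+(k+j+1)+2 = i+2*j+k+4 from by omega,
      show i+j+1+(k+j+1)+1 = i+2*j+k+3 from by omega,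
      show k+j+1-k-1 = j from by omega,
      show k+j+1-k = j+1 from by omega,
      show i+j+1+k+1 = i+j+k+2 from by omega,
      show i+j+1+k = i+j+k+1 from by omega,
      show i+j+1+1 = i+j+2 from by omega,
      show 2*(i+j+1)+k+3 = 2*i+2*j+k+5 from by omega,
      show 2*(i+j+1)+k+2 = 2*i+2*j+k+4 from by omega]
    exact starA i j k

noncomputable def Fp (a b k : ℕ) : Polynomial ℤ :=
  qbinom (a+b+1) (b-k) * qbinom (a+k) a * qbinom (a+k) b

def nE (a b k : ℕ) : ℕ :=
  b*(b-k) + k*a + k*k + a + k + Nat.choose (b-k+1) 2 + (a+k+1)*(b-k+1)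

noncomputable def SP (a b : ℕ) : Polynomial ℤ :=
  ∑ k ∈ Finset.range (b+1), (-1)^k * X^(nE a b k) * Fp a b k

lemma choose_two_succ (n : ℕ) : (n+1).choose 2 = n.choose 2 + n := by
  show (n+1).choose (1+1) = n.choose (1+1) + n
  rw [Nat.choose_succ_succ, Nat.choose_one_right, Nat.add_comm]

lemma nE_succ_left (a b k : ℕ) (hk : k ≤ b) : nE (a+1) b k = nE a b k + (b+2) := by
  obtain ⟨j, rfl⟩ : ∃ j, b = k+j := ⟨b-k, by omega⟩
  simp only [nE, show k+j-k = j from by omega]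
  ring

lemma nE_succ_right (a b k : ℕ) (hk : k < b) : nE a b (k+1) + (b-(k+1)) = nE a b k := by
  obtain ⟨j, rfl⟩ : ∃ j, b = k+(j+1) := ⟨b-k-1, by omega⟩
  simp only [nE, show k+(j+1)-k = j+1 from by omega, show k+(j+1)-(k+1) = j from by omega]
  rw [choose_two_succ (j+1)]
  ring

lemma key (a b : ℕ) : SP (a+1) b = X^(2*b+2) * SP a b := by
  have hP : ((1-X^(a+1))^2 : Polynomial ℤ) ≠ 0 := pow_ne_zero _ (one_sub_X_pow_ne_zero a)
  have main : ∀ m, m ≤ b →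
      (1-X^(a+1))^2 * (∑ j ∈ Finset.range m,
        ((-1)^j * X^(nE (a+1) b j) * Fp (a+1) b j
          - (-1)^j * X^(nE a b j + (2*b+2)) * Fp a b j))
      = (-1)^(m+1) * X^(nE a b m + (b-m) + (b+2)) *
          ((1-X^m) * (1-X^(2*a+m+2)) * Fp a b m) := by
    intro m
    induction m with
    | zero =>
      intro _
      simp
    | succ m ih =>
      intro hm
      obtain ⟨c, rfl⟩ : ∃ c, b = m+c+1 := ⟨b-m-1, by omega⟩
      have hIH := ih (by omega)
      rw [show m+c+1-m = c+1 from by omega] at hIH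
      have hn2 : nE a (m+c+1) (m+1) + c = nE a (m+c+1) m := by
        have h := nE_succ_right a (m+c+1) m (by omega)
        rwa [show m+c+1-(m+1) = c from by omega] at h
      rw [Finset.sum_range_succ, nE_succ_left a (m+c+1) m (by omega),
        show m+c+1-(m+1) = c from by omega, hn2]
      have hstar := star a (m+c+1) m (by omega)
      rw [show a+(m+c+1)+2 = a+m+c+3 from by omega,
        show m+c+1-m-1 = c from by omega,
        show m+c+1-m = c+1 from by omega,
        show a+(m+c+1)+1 = a+m+c+2 from by omega] at hstar
      simp only [Fp, show a+1+(m+c+1)+1 = a+m+c+3 from by omega,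
        show a+1+m = a+m+1 from by omega,
        show a+(m+c+1)+1 = a+m+c+2 from by omega,
        show a+(m+1) = a+m+1 from by omega,
        show m+c+1-(m+1) = c from by omega,
        show m+c+1-m = c+1 from by omega,
        show 2*a+(m+1)+2 = 2*a+m+3 from by omega] at hIH ⊢
      linear_combination hIH + ((-1)^m * X^(nE a (m+c+1) m + (m+c+1+2))) * hstar
  have hsum : SP (a+1) b - X^(2*b+2) * SP a b
      = ∑ j ∈ Finset.range (b+1),
        ((-1)^j * X^(nE (a+1) b j) * Fp (a+1) b j
          - (-1)^j * X^(nE a b j + (2*b+2)) * Fp a b j) := by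
    simp only [SP, Finset.mul_sum, ← Finset.sum_sub_distrib]
    refine Finset.sum_congr rfl ?_
    intro j _
    rw [pow_add]
    ring
  have hfin : (1-X^(a+1))^2 * (SP (a+1) b - X^(2*b+2) * SP a b) = 0 := by
    rw [hsum, Finset.sum_range_succ]
    have hmain := main b le_rfl
    have hstark := stark a b
    rw [nE_succ_left a b b le_rfl]
    simp only [Fp, Nat.sub_self, Nat.add_zero, qbinom_zero,
      show a+1+b+1 = a+b+2 from by omega,
      show a+1+b = a+b+1 from by omega] at hmain ⊢
    linear_combination hmain + ((-1)^b * X^(nE a b b + (b+2))) * hstark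
  have h0 := (mul_eq_zero.mp hfin).resolve_left hP
  exact sub_eq_zero.mp h0

lemma SPval (a b : ℕ) : SP a b = (-1)^b * X^(b*b+2*a*b+2*a+2*b+1) := by
  induction a with
  | zero =>
    rw [SP, Finset.sum_eq_single b]
    · have hnE : nE 0 b b = b*b+2*0*b+2*0+2*b+1 := by
        simp only [nE, Nat.sub_self, Nat.zero_add]
        rw [show Nat.choose (0+1) 2 = 0 from rfl]
        ring
      rw [hnE, Fp]
      simp only [Nat.sub_self, Nat.zero_add, qbinom_zero, qbinom_self]
      ring
    · intro k hk hkb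
      rw [Fp, qbinom_eq_zero (0+k) b (by simp at hk; omega)]
      ring
    · intro hb
      simp at hb
  | succ a ih =>
    rw [key a b, ih,
      show b*b+2*(a+1)*b+2*(a+1)+2*b+1 = (b*b+2*a*b+2*a+2*b+1)+(2*b+2) from by ring,
      pow_add]
    ring

lemma choose2_add (m n : ℕ) :
    (((m+n).choose 2 : ℕ) : ℤ) = (m.choose 2 : ℤ) + (n.choose 2 : ℤ) + m*n := by
  induction n with
  | zero => simp
  | succ n ih =>
    rw [show m+(n+1) = (m+n)+1 from rfl, choose_two_succ, choose_two_succ n]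
    push_cast
    push_cast at ih
    linear_combination ih

open LaurentPolynomial in
/-- `∑_{k=0}^{b} [a+b+1 choose b-k]_q [a+k choose a]_q [a+k choose b]_q
  (-1)^k q^{k(a-b+k)+a+k-C(a+k+1,2)} = (-1)^b q^{ab - C(a,2) - C(b,2)}` in `ℤ[q,q^{-1}]`. -/
theorem stmt12 (a b : ℕ) :
    ∑ k ∈ Finset.range (b + 1),
        Polynomial.toLaurent (qbinom (a + b + 1) (b - k) * qbinom (a + k) a * qbinom (a + k) b) *
          (-1) ^ k *
          T ((k : ℤ) * ((a : ℤ) - b + k) + a + k - ((a + k + 1).choose 2 : ℤ)) =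
      (-1) ^ b * T ((a : ℤ) * b - (a.choose 2 : ℤ) - (b.choose 2 : ℤ)) := by
  set N : ℕ := b*b + Nat.choose (a+b+2) 2 with hN
  have hE : ∀ k, k ≤ b →
      ((k : ℤ) * ((a : ℤ) - b + k) + a + k - ((a + k + 1).choose 2 : ℤ)) + (N : ℤ)
        = (nE a b k : ℤ) := by
    intro k hk
    obtain ⟨j, rfl⟩ : ∃ j, b = k + j := ⟨b-k, by omega⟩
    have h1 := choose2_add (a+k+1) (j+1)
    rw [show a+k+1+(j+1) = a+(k+j)+2 from by ring] at h1
    simp only [nE, hN, show k+j-k = j from by omega]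
    push_cast
    push_cast at h1
    linear_combination h1
  have hR : ((a : ℤ) * b - (a.choose 2 : ℤ) - (b.choose 2 : ℤ)) + (N : ℤ)
      = ((b*b+2*a*b+2*a+2*b+1 : ℕ) : ℤ) := by
    have h1 := choose2_add a (b+2)
    rw [show a+(b+2) = a+b+2 from by ring] at h1
    have h2 := choose2_add b 2
    rw [show ((2:ℕ).choose 2 : ℤ) = 1 from rfl] at h2
    simp only [hN]
    push_cast
    push_cast at h1 h2
    linear_combination h1 + h2
  have hu : IsUnit (T (N : ℤ) : LaurentPolynomial ℤ) := isUnit_T (N : ℤ)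
  apply hu.mul_right_cancel
  rw [Finset.sum_mul]
  have hSP := congrArg (Polynomial.toLaurent (R := ℤ)) (SPval a b)
  simp only [SP, Fp, map_sum, map_mul, Polynomial.toLaurent_X_pow] at hSP
  simp only [map_pow, map_neg, map_one] at hSP
  calc ∑ k ∈ Finset.range (b+1),
        Polynomial.toLaurent (qbinom (a + b + 1) (b - k) * qbinom (a + k) a * qbinom (a + k) b) *
          (-1) ^ k *
          T ((k : ℤ) * ((a : ℤ) - b + k) + a + k - ((a + k + 1).choose 2 : ℤ)) * T (N : ℤ)
      = ∑ k ∈ Finset.range (b+1),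
          (-1) ^ k * T ((nE a b k : ℕ) : ℤ) *
            (Polynomial.toLaurent (qbinom (a+b+1) (b-k)) *
              Polynomial.toLaurent (qbinom (a+k) a) * Polynomial.toLaurent (qbinom (a+k) b)) := by
        refine Finset.sum_congr rfl ?_
        intro k hk
        have hk' : k ≤ b := by simp at hk; omega
        rw [mul_assoc _ _ (T (N:ℤ)), ← T_add, hE k hk', map_mul, map_mul]
        ring
    _ = (-1) ^ b * T (((b*b+2*a*b+2*a+2*b+1 : ℕ)) : ℤ) := hSP
    _ = (-1) ^ b * T ((a : ℤ) * b - (a.choose 2 : ℤ) - (b.choose 2 : ℤ)) * T (N : ℤ) := by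
        conv_rhs => rw [mul_assoc, ← T_add, hR]
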